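/- If random variables U, V, X, Y satisfy the Markov chain U - V - X - Y (i.e., the joint distribution factors as P(u,v,x,y) = P(x) P(v|x) P(u|v) P(y|x)), then I(V;Y) ≥ I(V;Y|U). -/

import Mathlib

open Finset Real

noncomputable def prob {Ω α : Type*} [Fintype Ω] [DecidableEq α]
    (w : Ω → ℝ) (X : Ω → α) (a : α) : ℝ := ∑ ω, if X ω = a then w ω else 0

noncomputable def ent {Ω α : Type*} [Fintype Ω] [Fintype α] [DecidableEq α]
    (w : Ω → ℝ) (X : Ω → α) : ℝ := -∑ a, prob w X a * Real.logb 2 (prob w X a)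

noncomputable def condEnt {Ω α β : Type*} [Fintype Ω] [Fintype α] [DecidableEq α]
    [Fintype β] [DecidableEq β] (w : Ω → ℝ) (X : Ω → α) (Y : Ω → β) : ℝ :=
  ent w (fun ω => (X ω, Y ω)) - ent w Y

noncomputable def mi {Ω α β : Type*} [Fintype Ω] [Fintype α] [DecidableEq α]
    [Fintype β] [DecidableEq β] (w : Ω → ℝ) (X : Ω → α) (Y : Ω → β) : ℝ :=
  ent w X + ent w Y - ent w (fun ω => (X ω, Y ω))

noncomputable def cmi {Ω α β γ : Type*} [Fintype Ω] [Fintype α] [DecidableEq α]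
    [Fintype β] [DecidableEq β] [Fintype γ] [DecidableEq γ]
    (w : Ω → ℝ) (X : Ω → α) (Y : Ω → β) (Z : Ω → γ) : ℝ :=
  condEnt w X Z - condEnt w X (fun ω => (Y ω, Z ω))

def IsPMF {Ω : Type*} [Fintype Ω] (w : Ω → ℝ) : Prop :=
  (∀ ω, 0 ≤ w ω) ∧ ∑ ω, w ω = 1

/-- `A` and `C` are conditionally independent given `B`. -/
def CondIndep {Ω α β γ : Type*} [Fintype Ω] [DecidableEq α] [DecidableEq β] [DecidableEq γ]
    (w : Ω → ℝ) (A : Ω → α) (B : Ω → β) (C : Ω → γ) : Prop :=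
  ∀ a b c, prob w (fun ω => (A ω, B ω, C ω)) (a, b, c) * prob w B b =
    prob w (fun ω => (A ω, B ω)) (a, b) * prob w (fun ω => (B ω, C ω)) (b, c)

/-- Binary entropy function (base 2). -/
noncomputable def binEnt (x : ℝ) : ℝ := -(x * Real.logb 2 x) - (1 - x) * Real.logb 2 (1 - x)

section helpers
variable {Ω α β : Type*} [Fintype Ω]


lemma sum_weight_comp [Fintype α] [DecidableEq α] (w : Ω → ℝ) (Z : Ω → α) (f : α → ℝ) :
    ∑ ω, w ω * f (Z ω) = ∑ a, prob w Z a * f a := by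
  unfold prob
  simp only [Finset.sum_mul, ite_mul, zero_mul]
  rw [Finset.sum_comm]
  refine Finset.sum_congr rfl fun ω _ => ?_
  simp [Finset.sum_ite_eq]

lemma ent_eq [Fintype α] [DecidableEq α] (w : Ω → ℝ) (Z : Ω → α) :
    ent w Z = -∑ ω, w ω * logb 2 (prob w Z (Z ω)) := by
  rw [ent, sum_weight_comp w Z (fun a => logb 2 (prob w Z a))]

lemma prob_nonneg [DecidableEq α] {w : Ω → ℝ} (hw : ∀ ω, 0 ≤ w ω) (Z : Ω → α) (a : α) :
    0 ≤ prob w Z a := by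
  exact Finset.sum_nonneg fun ω _ => by split <;> simp [hw ω]

lemma sum_prob [Fintype α] [DecidableEq α] (w : Ω → ℝ) (Z : Ω → α) :
    ∑ a, prob w Z a = ∑ ω, w ω := by
  unfold prob
  rw [Finset.sum_comm]
  refine Finset.sum_congr rfl fun ω _ => ?_
  simp [Finset.sum_ite_eq]

lemma prob_pair_le_left [DecidableEq α] [DecidableEq β] {w : Ω → ℝ} (hw : ∀ ω, 0 ≤ w ω)
    (A : Ω → α) (B : Ω → β) (a : α) (b : β) :
    prob w (fun ω => (A ω, B ω)) (a, b) ≤ prob w A a := by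
  refine Finset.sum_le_sum fun ω _ => ?_
  by_cases h1 : A ω = a <;> by_cases h2 : B ω = b <;> simp [Prod.ext_iff, h1, h2, hw ω]

lemma prob_pair_le_right [DecidableEq α] [DecidableEq β] {w : Ω → ℝ} (hw : ∀ ω, 0 ≤ w ω)
    (A : Ω → α) (B : Ω → β) (a : α) (b : β) :
    prob w (fun ω => (A ω, B ω)) (a, b) ≤ prob w B b := by
  refine Finset.sum_le_sum fun ω _ => ?_
  by_cases h1 : A ω = a <;> by_cases h2 : B ω = b <;> simp [Prod.ext_iff, h1, h2, hw ω]


lemma sum_mul_sub3 {s : Finset Ω} (x a b c : Ω → ℝ) :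
    ∑ i ∈ s, x i * (a i - b i - c i)
      = ∑ i ∈ s, x i * a i - ∑ i ∈ s, x i * b i - ∑ i ∈ s, x i * c i := by
  rw [← Finset.sum_sub_distrib, ← Finset.sum_sub_distrib]
  exact Finset.sum_congr rfl fun i _ => by ring

lemma mi_nonneg [Fintype α] [DecidableEq α] [Fintype β] [DecidableEq β]
    {w : Ω → ℝ} (hw : IsPMF w) (A : Ω → α) (B : Ω → β) : 0 ≤ mi w A B := by
  obtain ⟨h0, h1⟩ := hw
  have hlog2 : (0:ℝ) < Real.log 2 := Real.log_pos one_lt_two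
  have hrep : mi w A B = ∑ c : α × β,
      prob w (fun ω => (A ω, B ω)) c *
        (logb 2 (prob w (fun ω => (A ω, B ω)) c) - logb 2 (prob w A c.1)
          - logb 2 (prob w B c.2)) := by
    rw [← sum_weight_comp w (fun ω => (A ω, B ω))
      (fun c => logb 2 (prob w (fun ω => (A ω, B ω)) c) - logb 2 (prob w A c.1)
          - logb 2 (prob w B c.2))]
    simp only [mi, ent_eq]
    rw [sum_mul_sub3]
    ring
  have hbound : ∀ c : α × β,
      (prob w (fun ω => (A ω, B ω)) c - prob w A c.1 * prob w B c.2) / Real.log 2 ≤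
      prob w (fun ω => (A ω, B ω)) c *
        (logb 2 (prob w (fun ω => (A ω, B ω)) c) - logb 2 (prob w A c.1)
          - logb 2 (prob w B c.2)) := by
    intro c
    rcases eq_or_lt_of_le (prob_nonneg h0 (fun ω => (A ω, B ω)) c) with h | h
    · rw [← h]
      simp only [zero_mul, zero_sub]
      apply div_nonpos_of_nonpos_of_nonneg
      · simp [mul_nonneg (prob_nonneg h0 A c.1) (prob_nonneg h0 B c.2)]
      · exact hlog2.le
    · have hA : 0 < prob w A c.1 :=
        lt_of_lt_of_le h (by simpa using prob_pair_le_left h0 A B c.1 c.2)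
      have hB : 0 < prob w B c.2 :=
        lt_of_lt_of_le h (by simpa using prob_pair_le_right h0 A B c.1 c.2)
      set p := prob w (fun ω => (A ω, B ω)) c with hp
      set q := prob w A c.1
      set r := prob w B c.2
      have hle := Real.log_le_sub_one_of_pos (show 0 < q * r / p by positivity)
      have hlogdiv : Real.log (q * r / p)
          = Real.log q + Real.log r - Real.log p := by
        rw [Real.log_div (by positivity) (ne_of_gt h), Real.log_mul (ne_of_gt hA) (ne_of_gt hB)]
      rw [hlogdiv] at hle
      have h2 : p * (Real.log q + Real.log r - Real.log p) ≤ q * r - p := by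
        have h3 := mul_le_mul_of_nonneg_left hle h.le
        calc p * (Real.log q + Real.log r - Real.log p)
            ≤ p * (q * r / p - 1) := h3
          _ = q * r - p := by field_simp
      simp only [Real.logb]
      rw [show Real.log p / Real.log 2 - Real.log q / Real.log 2 - Real.log r / Real.log 2
          = (Real.log p - Real.log q - Real.log r) / Real.log 2 by ring, ← mul_div_assoc]
      gcongr
      linarith [h2]
  have hsumAB : ∑ c : α × β, prob w (fun ω => (A ω, B ω)) c = 1 := by
    rw [sum_prob, h1]
  have hsumA : ∑ a, prob w A a = 1 := by rw [sum_prob, h1]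
  have hsumB : ∑ b, prob w B b = 1 := by rw [sum_prob, h1]
  have hsum : ∑ c : α × β,
      (prob w (fun ω => (A ω, B ω)) c - prob w A c.1 * prob w B c.2) / Real.log 2 = 0 := by
    rw [← Finset.sum_div, Finset.sum_sub_distrib, hsumAB, Fintype.sum_prod_type]
    simp only [← Finset.mul_sum, hsumB, mul_one]
    rw [hsumA]
    simp
  rw [hrep]
  calc (0:ℝ) = ∑ c : α × β,
      (prob w (fun ω => (A ω, B ω)) c - prob w A c.1 * prob w B c.2) / Real.log 2 := hsum.symm
    _ ≤ _ := Finset.sum_le_sum fun c _ => hbound c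


omit [Fintype Ω] in
lemma prob_congr [DecidableEq α] [DecidableEq β] [Fintype Ω] {w : Ω → ℝ}
    {Z : Ω → α} {T : Ω → β} {z : α} {t : β} (h : ∀ ω, Z ω = z ↔ T ω = t) :
    prob w Z z = prob w T t :=
  Finset.sum_congr rfl fun ω _ => if_congr (h ω) rfl rfl

omit [Fintype Ω] in
lemma le_prob [DecidableEq α] [Fintype Ω] {w : Ω → ℝ} (hw : ∀ ω, 0 ≤ w ω)
    (Z : Ω → α) (ω₀ : Ω) : w ω₀ ≤ prob w Z (Z ω₀) := by
  have := Finset.single_le_sum (f := fun ω => if Z ω = Z ω₀ then w ω else 0)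
    (fun ω _ => by split <;> simp [hw ω]) (Finset.mem_univ ω₀)
  simpa [prob] using this

lemma ent_eq_of_prob [Fintype α] [DecidableEq α] [Fintype β] [DecidableEq β]
    (w : Ω → ℝ) (Z : Ω → α) (T : Ω → β)
    (h : ∀ ω, prob w Z (Z ω) = prob w T (T ω)) : ent w Z = ent w T := by
  rw [ent_eq, ent_eq]
  exact congrArg _ (Finset.sum_congr rfl fun ω _ => by rw [h ω])

end helpers

section main
variable {Ω 𝒰 𝒱 𝒳 𝒴 : Type*} [Fintype Ω]
    [Fintype 𝒰] [DecidableEq 𝒰] [Fintype 𝒱] [DecidableEq 𝒱]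
    [Fintype 𝒳] [DecidableEq 𝒳] [Fintype 𝒴] [DecidableEq 𝒴]
    (w : Ω → ℝ) (U : Ω → 𝒰) (V : Ω → 𝒱) (X : Ω → 𝒳) (Y : Ω → 𝒴)

lemma margA (u : 𝒰) (v : 𝒱) (y : 𝒴) :
    ∑ x, prob w (fun ω => (U ω, V ω, (X ω, Y ω))) (u, v, (x, y))
      = prob w (fun ω => (U ω, (Y ω, V ω))) (u, (y, v)) := by
  unfold prob
  rw [Finset.sum_comm]
  refine Finset.sum_congr rfl fun ω _ => ?_
  by_cases h1 : U ω = u <;> by_cases h2 : V ω = v <;> by_cases h3 : Y ω = y <;>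
    simp [Prod.ext_iff, h1, h2, h3, Finset.sum_ite_eq]

lemma margB (v : 𝒱) (y : 𝒴) :
    ∑ x, prob w (fun ω => (V ω, (X ω, Y ω))) (v, (x, y))
      = prob w (fun ω => (Y ω, V ω)) (y, v) := by
  unfold prob
  rw [Finset.sum_comm]
  refine Finset.sum_congr rfl fun ω _ => ?_
  by_cases h2 : V ω = v <;> by_cases h3 : Y ω = y <;>
    simp [Prod.ext_iff, h2, h3, Finset.sum_ite_eq]

lemma derived_CI (hUV : CondIndep w U V (fun ω => (X ω, Y ω))) (u : 𝒰) (v : 𝒱) (y : 𝒴) :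
    prob w (fun ω => (U ω, (Y ω, V ω))) (u, (y, v)) * prob w V v
      = prob w (fun ω => (U ω, V ω)) (u, v) * prob w (fun ω => (Y ω, V ω)) (y, v) := by
  calc prob w (fun ω => (U ω, (Y ω, V ω))) (u, (y, v)) * prob w V v
      = (∑ x, prob w (fun ω => (U ω, V ω, (X ω, Y ω))) (u, v, (x, y))) * prob w V v := by
        rw [margA]
    _ = ∑ x, prob w (fun ω => (U ω, V ω, (X ω, Y ω))) (u, v, (x, y)) * prob w V v := by
        rw [Finset.sum_mul]
    _ = ∑ x, prob w (fun ω => (U ω, V ω)) (u, v)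
          * prob w (fun ω => (V ω, (X ω, Y ω))) (v, (x, y)) :=
        Finset.sum_congr rfl fun x _ => hUV u v (x, y)
    _ = prob w (fun ω => (U ω, V ω)) (u, v)
          * ∑ x, prob w (fun ω => (V ω, (X ω, Y ω))) (v, (x, y)) := by rw [Finset.mul_sum]
    _ = _ := by rw [margB]

lemma cmi_eq_zero (hw : IsPMF w) (hUV : CondIndep w U V (fun ω => (X ω, Y ω))) :
    cmi w U Y V = 0 := by
  obtain ⟨h0, _⟩ := hw
  simp only [cmi, condEnt]
  rw [ent_eq w (fun ω => (U ω, V ω)), ent_eq w V,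
    ent_eq w (fun ω => (U ω, (Y ω, V ω))), ent_eq w (fun ω => (Y ω, V ω))]
  have hpoint : ∀ ω, w ω * logb 2 (prob w V (V ω))
      + w ω * logb 2 (prob w (fun ω' => (U ω', (Y ω', V ω'))) (U ω, (Y ω, V ω)))
      = w ω * logb 2 (prob w (fun ω' => (U ω', V ω')) (U ω, V ω))
      + w ω * logb 2 (prob w (fun ω' => (Y ω', V ω')) (Y ω, V ω)) := by
    intro ω
    rcases (h0 ω).eq_or_lt with h | h
    · rw [← h]; ring
    · have hv : 0 < prob w V (V ω) := lt_of_lt_of_le h (le_prob h0 V ω)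
      have huv : 0 < prob w (fun ω' => (U ω', V ω')) (U ω, V ω) :=
        lt_of_lt_of_le h (le_prob h0 (fun ω' => (U ω', V ω')) ω)
      have hyv : 0 < prob w (fun ω' => (Y ω', V ω')) (Y ω, V ω) :=
        lt_of_lt_of_le h (le_prob h0 (fun ω' => (Y ω', V ω')) ω)
      have huyv : 0 < prob w (fun ω' => (U ω', (Y ω', V ω'))) (U ω, (Y ω, V ω)) :=
        lt_of_lt_of_le h (le_prob h0 (fun ω' => (U ω', (Y ω', V ω'))) ω)
      have heq := derived_CI w U V X Y hUV (U ω) (V ω) (Y ω)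
      have hlog := congrArg (Real.logb 2) heq
      rw [Real.logb_mul (ne_of_gt huyv) (ne_of_gt hv),
        Real.logb_mul (ne_of_gt huv) (ne_of_gt hyv)] at hlog
      linear_combination w ω * hlog
  have hsums : ∑ ω, (w ω * logb 2 (prob w V (V ω))
      + w ω * logb 2 (prob w (fun ω' => (U ω', (Y ω', V ω'))) (U ω, (Y ω, V ω))))
      = ∑ ω, (w ω * logb 2 (prob w (fun ω' => (U ω', V ω')) (U ω, V ω))
      + w ω * logb 2 (prob w (fun ω' => (Y ω', V ω')) (Y ω, V ω))) :=
    Finset.sum_congr rfl fun ω _ => hpoint ω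
  rw [Finset.sum_add_distrib, Finset.sum_add_distrib] at hsums
  linarith

end main

theorem mi_ge_cmi_of_markov_aux : True := trivial

/-- under the Markov chain U - V - X - Y, `I(V;Y) ≥ I(V;Y|U)`. -/

theorem mi_ge_cmi_of_markov {Ω 𝒰 𝒱 𝒳 𝒴 : Type*} [Fintype Ω]
    [Fintype 𝒰] [DecidableEq 𝒰] [Fintype 𝒱] [DecidableEq 𝒱]
    [Fintype 𝒳] [DecidableEq 𝒳] [Fintype 𝒴] [DecidableEq 𝒴]
    (w : Ω → ℝ) (hw : IsPMF w)
    (U : Ω → 𝒰) (V : Ω → 𝒱) (X : Ω → 𝒳) (Y : Ω → 𝒴)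
    (hUV : CondIndep w U V (fun ω => (X ω, Y ω)))
    (hXY : CondIndep w (fun ω => (U ω, V ω)) X Y) :
    mi w V Y ≥ cmi w V Y U := by
  have eVY : ent w (fun ω => (V ω, Y ω)) = ent w (fun ω => (Y ω, V ω)) :=
    ent_eq_of_prob w _ _ (fun ω₀ => prob_congr (fun ω => by simp [Prod.ext_iff]; tauto))
  have eVU : ent w (fun ω => (V ω, U ω)) = ent w (fun ω => (U ω, V ω)) :=
    ent_eq_of_prob w _ _ (fun ω₀ => prob_congr (fun ω => by simp [Prod.ext_iff]; tauto))
  have eYU : ent w (fun ω => (Y ω, U ω)) = ent w (fun ω => (U ω, Y ω)) :=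
    ent_eq_of_prob w _ _ (fun ω₀ => prob_congr (fun ω => by simp [Prod.ext_iff]; tauto))
  have eVYU : ent w (fun ω => (V ω, (Y ω, U ω))) = ent w (fun ω => (U ω, (Y ω, V ω))) :=
    ent_eq_of_prob w _ _ (fun ω₀ => prob_congr (fun ω => by simp [Prod.ext_iff]; tauto))
  have key : mi w V Y - cmi w V Y U = mi w U Y - cmi w U Y V := by
    simp only [mi, cmi, condEnt]
    rw [eVY, eVU, eYU, eVYU]
    ring
  have hz : cmi w U Y V = 0 := cmi_eq_zero w U V X Y hw hUV
  have hnn : 0 ≤ mi w U Y := mi_nonneg hw U Y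
  linarith
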